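/- Let n ≥ 2 be an integer. There exists a constant C > 0, depending only on n, such that for every ball B ⊂ ℝⁿ of radius 1 with center c_B, every point y ∈ ℝⁿ, and every s ∈ (0, 2], one has ∫_B χ_{(s,∞)}(|x−y|) · |x−y|^{2−n} (|x−y|² − s²)^{−1/2} dx ≤ C / (1 + |y−c_B|^{n−1}). -/

import Mathlib

open MeasureTheory Set Metric
open scoped ENNReal

local notation "dim" => Module.finrank ℝ

lemma my_lintegral_norm {E : Type*} [NormedAddCommGroup E] [NormedSpace ℝ E]
    [MeasurableSpace E] [BorelSpace E] [Nontrivial E] (μ : Measure E)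
    [FiniteDimensional ℝ E] [μ.IsAddHaarMeasure] (g : ℝ → ℝ≥0∞) (hg : Measurable g) :
    ∫⁻ x, g ‖x‖ ∂μ
      = μ.toSphere univ * ∫⁻ r in Ioi (0 : ℝ), ENNReal.ofReal (r ^ (dim E - 1)) * g r := by
  have h1 := lintegral_subtype_comap (μ := μ) (measurableSet_singleton (0:E)).compl
    (fun x => g ‖x‖)
  rw [MeasureTheory.restrict_compl_singleton] at h1
  have h2 := (μ.measurePreserving_homeomorphUnitSphereProd).lintegral_comp_emb
    (Homeomorph.measurableEmbedding _) (fun p : sphere (0:E) 1 × Ioi (0:ℝ) => g p.2)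
  simp only [homeomorphUnitSphereProd_apply_snd_coe] at h2
  rw [← h1, h2]
  have h3 : ∫⁻ p : sphere (0:E) 1 × Ioi (0:ℝ), g p.2
      ∂(μ.toSphere.prod (Measure.volumeIoiPow (dim E - 1)))
      = μ.toSphere univ * ∫⁻ r : Ioi (0:ℝ), g r ∂(Measure.volumeIoiPow (dim E - 1)) := by
    rw [MeasureTheory.lintegral_prod (fun p : sphere (0:E) 1 × Ioi (0:ℝ) => g p.2)
      ((hg.comp measurable_subtype_coe).comp measurable_snd).aemeasurable]
    simp [lintegral_const, mul_comm]
  rw [h3]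
  congr 1
  rw [Measure.volumeIoiPow, lintegral_withDensity_eq_lintegral_mul _
    (f := fun r : Ioi (0:ℝ) => ENNReal.ofReal (r.1 ^ (dim E - 1))) (by fun_prop)
    (g := fun r : Ioi (0:ℝ) => g r.1) (hg.comp measurable_subtype_coe)]
  have h4 := lintegral_subtype_comap (μ := (volume : Measure ℝ)) (measurableSet_Ioi (a := (0:ℝ)))
    (fun x : ℝ => ENNReal.ofReal (x ^ (dim E - 1)) * g x)
  rw [← h4]
  rfl

/-- core real inequality for the near case -/
lemma real_core (n : ℕ) (hn : 2 ≤ n) {s r : ℝ} (hs : 0 < s) (hsr : s < r) (hr5 : r ≤ 5) :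
    r ^ (n - 1) * (r ^ ((2:ℝ) - n) * (r ^ 2 - s ^ 2) ^ (-(1 / 2) : ℝ))
      ≤ (5:ℝ) ^ ((1/2 : ℝ)) * (r - s) ^ (-(1 / 2) : ℝ) := by
  have hr0 : 0 < r := hs.trans hsr
  have h1 : (r:ℝ) ^ (n-1) = r ^ ((n:ℝ) - 1) := by
    rw [← Real.rpow_natCast r (n-1)]
    congr 1
    push_cast [Nat.cast_sub (by omega : 1 ≤ n)]
    ring
  have h2 : r ^ ((n:ℝ)-1) * r ^ ((2:ℝ) - n) = r := by
    rw [← Real.rpow_add hr0]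
    ring_nf
    exact Real.rpow_one r
  have hfact : r ^ 2 - s ^ 2 = (r - s) * (r + s) := by ring
  have h3 : (r ^ 2 - s ^ 2) ^ (-(1/2) : ℝ) ≤ (r - s) ^ (-(1/2) : ℝ) * r ^ (-(1/2) : ℝ) := by
    rw [hfact, Real.mul_rpow (by linarith) (by linarith)]
    have h := Real.rpow_le_rpow_of_nonpos hr0 (by linarith : r ≤ r + s)
      (by norm_num : -(1/2 : ℝ) ≤ 0)
    exact mul_le_mul_of_nonneg_left h (Real.rpow_nonneg (by linarith) _)
  have h4 : r * r ^ (-(1/2) : ℝ) = r ^ ((1/2 : ℝ)) := by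
    nth_rewrite 1 [← Real.rpow_one r]
    rw [← Real.rpow_add hr0]
    norm_num
  calc r ^ (n - 1) * (r ^ ((2:ℝ) - n) * (r ^ 2 - s ^ 2) ^ (-(1/2) : ℝ))
      = (r ^ ((n:ℝ)-1) * r ^ ((2:ℝ) - n)) * (r ^ 2 - s ^ 2) ^ (-(1/2) : ℝ) := by
        rw [h1]; ring
    _ = r * (r ^ 2 - s ^ 2) ^ (-(1/2) : ℝ) := by rw [h2]
    _ ≤ r * ((r - s) ^ (-(1/2) : ℝ) * r ^ (-(1/2) : ℝ)) :=
        mul_le_mul_of_nonneg_left h3 hr0.le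
    _ = (r * r ^ (-(1/2) : ℝ)) * (r - s) ^ (-(1/2) : ℝ) := by ring
    _ = r ^ ((1/2 : ℝ)) * (r - s) ^ (-(1/2) : ℝ) := by rw [h4]
    _ ≤ (5:ℝ) ^ ((1/2 : ℝ)) * (r - s) ^ (-(1/2) : ℝ) := by
        exact mul_le_mul_of_nonneg_right
          (Real.rpow_le_rpow hr0.le hr5 (by norm_num))
          (Real.rpow_nonneg (by linarith) _)

set_option maxHeartbeats 1000000 in
/-- Lemma `lem:ball-integral-estimate`: for a unit ball `B` with center `cB`, a point `y`,
and `0 < s ≤ 2`, the integral over `B` of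
`χ_{(s,∞)}(|x-y|) · |x-y|^{2-n} (|x-y|² - s²)^{-1/2}` is bounded by `C / (1 + |y - cB|^{n-1})`
with `C` depending only on `n`. -/
theorem stmt_0 (n : ℕ) (hn : 2 ≤ n) :
    ∃ C : ℝ, 0 < C ∧
      ∀ (cB y : EuclideanSpace ℝ (Fin n)) (s : ℝ), 0 < s → s ≤ 2 →
        (∫⁻ x in Metric.ball cB 1,
            ENNReal.ofReal ((Set.Ioi s).indicator (fun _ => (1 : ℝ)) (dist x y) *
              (dist x y ^ ((2 : ℝ) - n) * (dist x y ^ 2 - s ^ 2) ^ (-(1 / 2) : ℝ))))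
          ≤ ENNReal.ofReal (C / (1 + dist y cB ^ ((n : ℝ) - 1))) := by
  classical
  have hn2 : (2:ℝ) ≤ (n:ℝ) := by exact_mod_cast hn
  haveI : Nonempty (Fin n) := ⟨⟨0, by omega⟩⟩
  haveI hnt : Nontrivial (EuclideanSpace ℝ (Fin n)) := inferInstance
  have hdim : dim (EuclideanSpace ℝ (Fin n)) = n := finrank_euclideanSpace_fin
  set Vtop : ℝ≥0∞ := volume (ball (0 : EuclideanSpace ℝ (Fin n)) 1) with hVtopdef
  have hVtop : Vtop ≠ ⊤ := measure_ball_lt_top.ne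
  set V : ℝ := Vtop.toReal with hVdef
  have hVeq : Vtop = ENNReal.ofReal V := (ENNReal.ofReal_toReal hVtop).symm
  have hV0 : 0 ≤ V := ENNReal.toReal_nonneg
  have h4pow : (0:ℝ) ≤ (4:ℝ) ^ ((n:ℝ) - 1) := Real.rpow_nonneg (by norm_num) _
  have h43pow : (0:ℝ) ≤ (4/3:ℝ) ^ ((n:ℝ) - 1) := Real.rpow_nonneg (by norm_num) _
  set A : ℝ := 10 * n * V with hAdef
  have hA0 : 0 ≤ A := by positivity
  set C : ℝ := (A + 1) * (1 + (4:ℝ) ^ ((n:ℝ) - 1)) + 4 * V * (4/3:ℝ) ^ ((n:ℝ) - 1) + 1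
    with hCdef
  have hC : 0 < C := by positivity
  refine ⟨C, hC, ?_⟩
  intro cB y s hs hs2
  set d := dist y cB with hd
  have hd0 : 0 ≤ d := dist_nonneg
  have hdpow0 : (0:ℝ) < 1 + d ^ ((n:ℝ) - 1) := by positivity
  set G : ℝ → ℝ≥0∞ := fun r => ENNReal.ofReal ((Set.Ioi s).indicator (fun _ => (1 : ℝ)) r *
    (r ^ ((2 : ℝ) - n) * (r ^ 2 - s ^ 2) ^ (-(1 / 2) : ℝ))) with hGdef
  have hGmeas : Measurable G := by
    apply Measurable.ennreal_ofReal
    apply Measurable.mul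
    · exact measurable_const.indicator measurableSet_Ioi
    · exact ((by fun_prop : Measurable fun r : ℝ => r ^ ((2:ℝ) - n))).mul
        ((by fun_prop : Measurable fun r : ℝ => (r ^ 2 - s ^ 2) ^ (-(1 / 2) : ℝ)))
  have hGzero : ∀ r : ℝ, ¬ (s < r) → G r = 0 := by
    intro r hr
    simp only [hGdef, indicator_of_notMem (by simpa using hr : r ∉ Ioi s), zero_mul,
      ENNReal.ofReal_zero]
  show ∫⁻ x in ball cB 1, G (dist x y) ≤ ENNReal.ofReal (C / (1 + d ^ ((n:ℝ) - 1)))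
  rcases le_total d 4 with hd4 | hd4
  · -- near case
    set F : ℝ → ℝ≥0∞ := (Iio (5:ℝ)).indicator G with hFdef
    have hFmeas : Measurable F := hGmeas.indicator measurableSet_Iio
    have hs5 : s ≤ 5 := by linarith
    have step1 : ∫⁻ x in ball cB 1, G (dist x y) = ∫⁻ x in ball cB 1, F (dist x y) := by
      apply setLIntegral_congr_fun measurableSet_ball
      intro x hx
      dsimp only
      have hlt : dist x y < 5 := by
        have h1 := dist_triangle x cB y
        have h2 : dist cB y = d := dist_comm cB y
        have h3 : dist x cB < 1 := mem_ball.mp hx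
        linarith
      rw [hFdef, indicator_of_mem (mem_Iio.2 hlt)]
    have step2 := setLIntegral_le_lintegral (μ := (volume : Measure (EuclideanSpace ℝ (Fin n)))) (ball cB 1) (fun x => F (dist x y))
    have step3 : ∫⁻ x : EuclideanSpace ℝ (Fin n), F (dist x y) = ∫⁻ x : EuclideanSpace ℝ (Fin n), F ‖x‖ := by
      simp_rw [dist_eq_norm]
      exact lintegral_sub_right_eq_self (fun x => F ‖x‖) y
    have step4 := my_lintegral_norm (volume : Measure (EuclideanSpace ℝ (Fin n))) F hFmeas
    rw [hdim] at step4
    set Φ : ℝ → ℝ≥0∞ := (Ioc s 5).indicator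
      (fun r => ENNReal.ofReal ((5:ℝ) ^ ((1/2:ℝ)) * (r - s) ^ (-(1/2):ℝ))) with hΦdef
    have hΦmeas : Measurable Φ :=
      (Measurable.ennreal_ofReal (by fun_prop)).indicator measurableSet_Ioc
    have hpt2 : ∀ r ∈ Ioi (0:ℝ), ENNReal.ofReal (r ^ (n - 1)) * F r ≤ Φ r := by
      intro r hr
      by_cases h5 : r < 5
      · by_cases hsr : s < r
        · have hmem : r ∈ Ioc s 5 := ⟨hsr, h5.le⟩
          have hr0 : (0:ℝ) < r := hr
          have hFr : F r = ENNReal.ofReal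
              (r ^ ((2 : ℝ) - n) * (r ^ 2 - s ^ 2) ^ (-(1 / 2) : ℝ)) := by
            rw [hFdef, indicator_of_mem (mem_Iio.2 h5), hGdef]
            simp only [indicator_of_mem (mem_Ioi.2 hsr), one_mul]
          rw [hFr, ← ENNReal.ofReal_mul (pow_nonneg hr0.le _), hΦdef, indicator_of_mem hmem]
          exact ENNReal.ofReal_le_ofReal (real_core n hn hs hsr h5.le)
        · rw [hFdef, indicator_of_mem (mem_Iio.2 h5), hGzero _ hsr, mul_zero]
          exact zero_le
      · rw [hFdef, indicator_of_notMem (by simpa using h5 : r ∉ Iio (5:ℝ)), mul_zero]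
        exact zero_le
    have step5 : (∫⁻ r in Ioi (0:ℝ), ENNReal.ofReal (r ^ (n-1)) * F r) ≤ ∫⁻ r, Φ r :=
      le_trans (setLIntegral_mono hΦmeas hpt2) (setLIntegral_le_lintegral _ _)
    have step6 : (∫⁻ r, Φ r)
        = ∫⁻ r in Ioc s 5, ENNReal.ofReal ((5:ℝ) ^ ((1/2:ℝ)) * (r - s) ^ (-(1/2):ℝ)) := by
      rw [hΦdef]
      exact lintegral_indicator measurableSet_Ioc _
    set φ : ℝ → ℝ := fun r => (5:ℝ) ^ ((1/2:ℝ)) * (r - s) ^ (-(1/2):ℝ) with hφdef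
    have hInt : IntervalIntegrable (fun r : ℝ => (r - s) ^ (-(1/2):ℝ)) volume s 5 := by
      have h := (intervalIntegral.intervalIntegrable_rpow' (a := 0) (b := 5 - s)
        (by norm_num : (-1:ℝ) < -(1/2))).comp_sub_right s
      simpa using h
    have hIntφ : IntervalIntegrable φ volume s 5 := hInt.const_mul _
    have hIOn : IntegrableOn φ (Ioc s 5) volume := hIntφ.1
    have hval : (∫ r in Ioc s 5, φ r) ≤ 10 := by
      rw [← intervalIntegral.integral_of_le hs5]
      have h1 : (∫ r in s..5, φ r)
          = (5:ℝ) ^ ((1/2:ℝ)) * ∫ r in s..5, (r - s) ^ (-(1/2):ℝ) :=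
        intervalIntegral.integral_const_mul _ _
      have h2 : (∫ r in s..5, (r - s) ^ (-(1/2):ℝ))
          = ∫ u in (0:ℝ)..(5 - s), u ^ (-(1/2):ℝ) := by
        have h := intervalIntegral.integral_comp_sub_right (a := s) (b := 5)
          (fun u : ℝ => u ^ (-(1/2):ℝ)) s
        simpa using h
      have h3 : (∫ u in (0:ℝ)..(5 - s), u ^ (-(1/2):ℝ)) = 2 * (5 - s) ^ ((1/2:ℝ)) := by
        rw [integral_rpow (Or.inl (by norm_num))]
        rw [show (-(1/2:ℝ) + 1) = (1/2:ℝ) by norm_num, Real.zero_rpow (by norm_num : (1/2:ℝ) ≠ 0)]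
        ring
      rw [h1, h2, h3]
      have h4 : ((5:ℝ) - s) ^ ((1/2:ℝ)) ≤ (5:ℝ) ^ ((1/2:ℝ)) :=
        Real.rpow_le_rpow (by linarith) (by linarith) (by norm_num)
      have h5' : (5:ℝ) ^ ((1/2:ℝ)) * (5:ℝ) ^ ((1/2:ℝ)) = 5 := by
        rw [← Real.rpow_add (by norm_num : (0:ℝ) < 5)]; norm_num
      nlinarith [Real.rpow_nonneg (show (0:ℝ) ≤ 5 by norm_num) ((1/2:ℝ)),
        Real.rpow_nonneg (show (0:ℝ) ≤ 5 - s by linarith) ((1/2:ℝ))]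
    have step7 : (∫⁻ r in Ioc s 5, ENNReal.ofReal (φ r)) ≤ ENNReal.ofReal 10 := by
      rw [← ofReal_integral_eq_lintegral_ofReal hIOn ?_]
      · exact ENNReal.ofReal_le_ofReal hval
      · rw [Filter.EventuallyLE, ae_restrict_iff' measurableSet_Ioc]
        refine Filter.Eventually.of_forall fun r hr => ?_
        have h0 : (0:ℝ) ≤ (r - s) ^ (-(1/2):ℝ) := Real.rpow_nonneg (by linarith [hr.1]) _
        have h0' : (0:ℝ) ≤ (5:ℝ) ^ ((1/2:ℝ)) := Real.rpow_nonneg (by norm_num) _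
        simpa [hφdef] using mul_nonneg h0' h0
    have hK : (volume : Measure (EuclideanSpace ℝ (Fin n))).toSphere univ
        = ENNReal.ofReal ((n : ℝ) * V) := by
      rw [Measure.toSphere_apply_univ, hdim, ← hVtopdef, hVeq, ← ENNReal.ofReal_natCast n,
        ← ENNReal.ofReal_mul (Nat.cast_nonneg n)]
    calc ∫⁻ x in ball cB 1, G (dist x y) = ∫⁻ x in ball cB 1, F (dist x y) := step1
      _ ≤ ∫⁻ x : EuclideanSpace ℝ (Fin n), F (dist x y) := step2
      _ = ∫⁻ x : EuclideanSpace ℝ (Fin n), F ‖x‖ := step3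
      _ = (volume : Measure (EuclideanSpace ℝ (Fin n))).toSphere univ *
            ∫⁻ r in Ioi (0:ℝ), ENNReal.ofReal (r ^ (n-1)) * F r := step4
      _ ≤ ENNReal.ofReal ((n : ℝ) * V) * ENNReal.ofReal 10 := by
          rw [hK]
          exact mul_le_mul_right (le_trans step5 (step6 ▸ step7)) _
      _ = ENNReal.ofReal ((n : ℝ) * V * 10) := by
          rw [← ENNReal.ofReal_mul (by positivity)]
      _ ≤ ENNReal.ofReal (C / (1 + d ^ ((n:ℝ) - 1))) := by
          apply ENNReal.ofReal_le_ofReal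
          rw [le_div_iff₀ hdpow0]
          have hdle : d ^ ((n:ℝ)-1) ≤ (4:ℝ) ^ ((n:ℝ)-1) :=
            Real.rpow_le_rpow hd0 hd4 (by linarith)
          have hAeq : (n : ℝ) * V * 10 = A := by rw [hAdef]; ring
          rw [hAeq, hCdef]
          nlinarith [mul_le_mul_of_nonneg_left hdle hA0, hA0, h4pow, h43pow, hV0]
  · -- far case
    have hd1 : (0:ℝ) < d - 1 := by linarith
    have hpt : ∀ x ∈ ball cB 1, G (dist x y)
        ≤ ENNReal.ofReal (2 * (d-1) ^ ((1:ℝ) - n)) := by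
      intro x hx
      by_cases hrs : s < dist x y
      · set r := dist x y with hrdef
        have hr0 : 0 < r := hs.trans hrs
        have hdr : d - 1 ≤ r := by
          have h1 : d ≤ dist y x + dist x cB := dist_triangle y x cB
          have h2 : dist y x = r := dist_comm y x
          have h3 : dist x cB < 1 := mem_ball.mp hx
          linarith
        have hr3 : 3 ≤ r := by linarith
        have hsq : s ^ 2 ≤ 4 := by nlinarith
        have hq : (2/3*r) ^ 2 ≤ r ^ 2 - s ^ 2 := by nlinarith
        have h23 : (0:ℝ) < 2/3*r := by linarith
        have hstepa : (r ^ 2 - s ^ 2) ^ (-(1/2) : ℝ) ≤ ((2/3*r) ^ 2 : ℝ) ^ (-(1/2) : ℝ) :=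
          Real.rpow_le_rpow_of_nonpos (by positivity) hq (by norm_num)
        have hstepb : ((2/3*r) ^ 2 : ℝ) ^ (-(1/2) : ℝ) = (2/3*r)⁻¹ := by
          rw [← Real.rpow_natCast (2/3*r) 2, ← Real.rpow_mul h23.le]
          norm_num [Real.rpow_neg_one]
        have hbound : r ^ ((2:ℝ) - n) * (r ^ 2 - s ^ 2) ^ (-(1/2) : ℝ)
            ≤ 2 * (d-1) ^ ((1:ℝ) - n) := by
          have hrn : (0:ℝ) ≤ r ^ ((2:ℝ) - n) := Real.rpow_nonneg hr0.le _
          have e1 : r ^ ((2:ℝ) - n) * (2/3*r)⁻¹ = 3/2 * r ^ ((1:ℝ) - n) := by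
            rw [mul_inv, ← Real.rpow_neg_one r]
            rw [show r ^ ((2:ℝ) - n) * ((2/3:ℝ)⁻¹ * r ^ (-1:ℝ))
              = (2/3:ℝ)⁻¹ * (r ^ ((2:ℝ) - n) * r ^ (-1:ℝ)) from by ring]
            rw [← Real.rpow_add hr0]
            norm_num
            ring_nf
          have e2 : r ^ ((1:ℝ) - n) ≤ (d-1) ^ ((1:ℝ) - n) :=
            Real.rpow_le_rpow_of_nonpos hd1 hdr (by linarith)
          have e3 : (0:ℝ) ≤ (d-1) ^ ((1:ℝ) - n) := Real.rpow_nonneg hd1.le _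
          calc r ^ ((2:ℝ) - n) * (r ^ 2 - s ^ 2) ^ (-(1/2) : ℝ)
              ≤ r ^ ((2:ℝ) - n) * (2/3*r)⁻¹ := by
                rw [← hstepb]; exact mul_le_mul_of_nonneg_left hstepa hrn
            _ = 3/2 * r ^ ((1:ℝ) - n) := e1
            _ ≤ 3/2 * (d-1) ^ ((1:ℝ) - n) := by linarith
            _ ≤ 2 * (d-1) ^ ((1:ℝ) - n) := by linarith
        calc G r = ENNReal.ofReal (r ^ ((2:ℝ) - n) * (r ^ 2 - s ^ 2) ^ (-(1/2) : ℝ)) := by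
              simp only [hGdef, indicator_of_mem (by simpa using hrs : r ∈ Ioi s), one_mul]
          _ ≤ ENNReal.ofReal (2 * (d-1) ^ ((1:ℝ) - n)) := ENNReal.ofReal_le_ofReal hbound
      · rw [hGzero _ hrs]; exact zero_le
    calc ∫⁻ x in ball cB 1, G (dist x y)
        ≤ ∫⁻ _ in ball cB 1, ENNReal.ofReal (2 * (d-1) ^ ((1:ℝ) - n)) ∂volume :=
          setLIntegral_mono measurable_const hpt
      _ = ENNReal.ofReal (2 * (d-1) ^ ((1:ℝ) - n)) * volume (ball cB 1) :=
          setLIntegral_const _ _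
      _ = ENNReal.ofReal (2 * (d-1) ^ ((1:ℝ) - n) * V) := by
          rw [Measure.addHaar_ball_center volume cB 1, ← hVtopdef, hVeq,
            ← ENNReal.ofReal_mul (by positivity)]
      _ ≤ ENNReal.ofReal (C / (1 + d ^ ((n:ℝ) - 1))) := by
          apply ENNReal.ofReal_le_ofReal
          rw [le_div_iff₀ hdpow0]
          have key1 : d ^ ((n:ℝ)-1) ≤ (4/3:ℝ) ^ ((n:ℝ)-1) * (d-1) ^ ((n:ℝ)-1) := by
            have h1 : d ≤ 4/3 * (d-1) := by linarith
            calc d ^ ((n:ℝ)-1) ≤ (4/3 * (d-1)) ^ ((n:ℝ)-1) :=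
                  Real.rpow_le_rpow hd0 h1 (by linarith)
              _ = (4/3:ℝ) ^ ((n:ℝ)-1) * (d-1) ^ ((n:ℝ)-1) :=
                  Real.mul_rpow (by norm_num) hd1.le
          have key2 : (d-1) ^ ((1:ℝ) - n) * (d-1) ^ ((n:ℝ)-1) = 1 := by
            rw [← Real.rpow_add hd1]
            ring_nf
            exact Real.rpow_zero _
          have key3 : (1:ℝ) ≤ d ^ ((n:ℝ)-1) := by
            calc (1:ℝ) = (1:ℝ) ^ ((n:ℝ)-1) := (Real.one_rpow _).symm
              _ ≤ d ^ ((n:ℝ)-1) := Real.rpow_le_rpow zero_le_one (by linarith) (by linarith)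
          have e3 : (0:ℝ) ≤ (d-1) ^ ((1:ℝ) - n) := Real.rpow_nonneg hd1.le _
          have e4 : 2 * (d-1) ^ ((1:ℝ) - n) * V * (1 + d ^ ((n:ℝ)-1))
              ≤ 2 * (d-1) ^ ((1:ℝ) - n) * V * (2 * ((4/3:ℝ) ^ ((n:ℝ)-1) * (d-1) ^ ((n:ℝ)-1))) := by
            apply mul_le_mul_of_nonneg_left _ (by positivity)
            linarith
          have e5 : 2 * (d-1) ^ ((1:ℝ) - n) * V * (2 * ((4/3:ℝ) ^ ((n:ℝ)-1) * (d-1) ^ ((n:ℝ)-1)))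
              = 4 * V * (4/3:ℝ) ^ ((n:ℝ)-1) := by
            have e5eq : 2 * (d-1) ^ ((1:ℝ) - n) * V * (2 * ((4/3:ℝ) ^ ((n:ℝ)-1) * (d-1) ^ ((n:ℝ)-1)))
              = 4 * V * (4/3:ℝ) ^ ((n:ℝ)-1) * ((d-1) ^ ((1:ℝ) - n) * (d-1) ^ ((n:ℝ)-1)) := by
              ring
            rw [e5eq, key2, mul_one]
          have e6 : 4 * V * (4/3:ℝ) ^ ((n:ℝ)-1) ≤ C := by
            rw [hCdef]
            nlinarith [h4pow, hA0]
          exact (e4.trans_eq e5).trans e6
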